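/- Let μ be a weight measure over a finite alphabet Σ with values in a linearly ordered cancellative commutative monoid A and let w ∈ Σ*. Then w is μ-prefix normal if and only if for all a, b ∈ A with 1 ≤ a, 1 ≤ b and a·b ≤ μ(w), one has maxpos_{w,μ}(a) + minpos_{w,μ}(b) ≤ minpos_{w,μ}(a·b), where maxpos_{w,μ}(x) = max{ k ∈ {0,…,|w|} : p_{w,μ}(k) ≤ x } and minpos_{w,μ}(x) = min{ k ∈ {0,…,|w|} : p_{w,μ}(k) ≥ x }. -/

import Mathlib

/-- The weight of a word: the product of the weights of its letters. -/
def weight {α A : Type*} [CommMonoid A] [LinearOrder A] [IsOrderedCancelMonoid A] (μ : α → A) (w : List α) : A :=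
  (w.map μ).prod

/-- The factor-weight function: `factorWeight μ w i` is the maximum weight of a
length-`i` factor (contiguous subword) of `w`. -/
def factorWeight {α A : Type*} [CommMonoid A] [LinearOrder A] [IsOrderedCancelMonoid A] (μ : α → A)
    (w : List α) (i : ℕ) : A :=
  ((List.range (w.length + 1 - i)).map fun j => weight μ ((w.drop j).take i)).foldr max 1

/-- A word is `μ`-prefix normal if its factor-weight function agrees with its
prefix-weight function. -/
def PrefixNormal {α A : Type*} [CommMonoid A] [LinearOrder A] [IsOrderedCancelMonoid A] (μ : α → A)
    (w : List α) : Prop :=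
  ∀ i ≤ w.length, factorWeight μ w i = weight μ (w.take i)

/-- A weight measure is gapfree if for every word `w` and every `1 ≤ i ≤ |w|` there is a
letter `a` with `f_{w,μ}(i) = f_{w,μ}(i-1) * μ a`. -/
def Gapfree {α A : Type*} [CommMonoid A] [LinearOrder A] [IsOrderedCancelMonoid A] (μ : α → A) : Prop :=
  ∀ w : List α, ∀ i, 1 ≤ i → i ≤ w.length →
    ∃ a : α, factorWeight μ w i = factorWeight μ w (i - 1) * μ a

/-- `pnClass μ w` is the set `P_μ(w)` of words that are factor-weight equivalent to `w`
and `μ`-prefix normal. -/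
def pnClass {α A : Type*} [CommMonoid A] [LinearOrder A] [IsOrderedCancelMonoid A] (μ : α → A)
    (w : List α) : Set (List α) :=
  {v | (∀ i, factorWeight μ v i = factorWeight μ w i) ∧ PrefixNormal μ v}

/-- The min-position function: `minpos μ w x = min { k ∈ {0,…,|w|} : p_{w,μ}(k) ≥ x }`. -/
noncomputable def minpos {α A : Type*} [CommMonoid A] [LinearOrder A] [IsOrderedCancelMonoid A] (μ : α → A)
    (w : List α) (x : A) : ℕ :=
  sInf {k | k ≤ w.length ∧ x ≤ weight μ (w.take k)}

/-- The max-position function: `maxpos μ w x = max { k ∈ {0,…,|w|} : p_{w,μ}(k) ≤ x }`. -/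
noncomputable def maxpos {α A : Type*} [CommMonoid A] [LinearOrder A] [IsOrderedCancelMonoid A] (μ : α → A)
    (w : List α) (x : A) : ℕ :=
  sSup {k | k ≤ w.length ∧ weight μ (w.take k) ≤ x}

section Aux

variable {α A : Type*} [CommMonoid A] [LinearOrder A] [IsOrderedCancelMonoid A] (μ : α → A)

lemma weight_append (u v : List α) : weight μ (u ++ v) = weight μ u * weight μ v := by
  simp [weight]

lemma one_le_weight (hμ : ∀ a : α, 1 < μ a) (u : List α) : 1 ≤ weight μ u := by
  induction u with
  | nil => simp [weight]
  | cons a t ih =>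
    have : weight μ (a :: t) = μ a * weight μ t := by simp [weight]
    rw [this]
    exact one_le_mul (hμ a).le ih

lemma one_lt_weight (hμ : ∀ a : α, 1 < μ a) {u : List α} (h : u ≠ []) : 1 < weight μ u := by
  cases u with
  | nil => exact absurd rfl h
  | cons a t =>
    have : weight μ (a :: t) = μ a * weight μ t := by simp [weight]
    rw [this]
    calc 1 < μ a := hμ a
    _ ≤ μ a * weight μ t := le_mul_of_one_le_right' (one_le_weight μ hμ t)

lemma prefix_split (w : List α) {k l : ℕ} (h : k ≤ l) :
    weight μ (w.take l) = weight μ (w.take k) * weight μ ((w.drop k).take (l - k)) := by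
  rw [← weight_append, ← List.take_add, Nat.add_sub_cancel' h]

lemma prefix_mono (hμ : ∀ a : α, 1 < μ a) (w : List α) {k l : ℕ} (h : k ≤ l) :
    weight μ (w.take k) ≤ weight μ (w.take l) := by
  rw [prefix_split μ w h]
  exact le_mul_of_one_le_right' (one_le_weight μ hμ _)

lemma prefix_strict (hμ : ∀ a : α, 1 < μ a) (w : List α) {k l : ℕ} (h : k < l)
    (hl : l ≤ w.length) : weight μ (w.take k) < weight μ (w.take l) := by
  rw [prefix_split μ w h.le]
  have hne : (w.drop k).take (l - k) ≠ [] := by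
    simp only [ne_eq, List.take_eq_nil_iff]
    push_neg
    constructor
    · omega
    · intro hd
      have := congrArg List.length hd
      simp at this
      omega
  exact lt_mul_of_one_lt_right' _ (one_lt_weight μ hμ hne)

lemma le_foldr_max {x : A} {l : List A} (h : x ∈ l) : x ≤ l.foldr max 1 := by
  induction l with
  | nil => simp at h
  | cons y t ih =>
    rcases List.mem_cons.1 h with rfl | h
    · exact le_max_left _ _
    · exact le_trans (ih h) (le_max_right _ _)

lemma foldr_max_le {c : A} (h1 : 1 ≤ c) {l : List A} (h : ∀ x ∈ l, x ≤ c) :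
    l.foldr max 1 ≤ c := by
  induction l with
  | nil => simpa using h1
  | cons y t ih =>
    exact max_le (h y List.mem_cons_self) (ih fun x hx => h x (List.mem_cons_of_mem _ hx))

lemma factor_le_factorWeight (w : List α) {i j : ℕ} (h : j + i ≤ w.length) :
    weight μ ((w.drop j).take i) ≤ factorWeight μ w i := by
  apply le_foldr_max
  simp only [List.mem_map, List.mem_range]
  exact ⟨j, by omega, rfl⟩

lemma prefix_le_factorWeight (hμ : ∀ a : α, 1 < μ a) (w : List α) {i : ℕ} (h : i ≤ w.length) :
    weight μ (w.take i) ≤ factorWeight μ w i := by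
  have := factor_le_factorWeight μ w (j := 0) (i := i) (by omega)
  simpa using this

lemma factorWeight_le (w : List α) (i : ℕ) {c : A} (h1 : 1 ≤ c)
    (h : ∀ j, j + i ≤ w.length → weight μ ((w.drop j).take i) ≤ c) :
    factorWeight μ w i ≤ c := by
  apply foldr_max_le h1
  intro x hx
  simp only [List.mem_map, List.mem_range] at hx
  obtain ⟨j, hj, rfl⟩ := hx
  exact h j (by omega)

end Aux

/-- A word is `μ`-prefix normal iff for all `a, b ∈ A` with `1 ≤ a`, `1 ≤ b` and
`a * b ≤ μ(w)` one has `maxpos_{w,μ}(a) + minpos_{w,μ}(b) ≤ minpos_{w,μ}(a * b)`. -/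
theorem prefixNormal_iff_maxpos_minpos {α A : Type*} [Fintype α]
    [CommMonoid A] [LinearOrder A] [IsOrderedCancelMonoid A] (μ : α → A) (hμ : ∀ a : α, 1 < μ a)
    (w : List α) :
    PrefixNormal μ w ↔
      ∀ a b : A, 1 ≤ a → 1 ≤ b → a * b ≤ weight μ w →
        maxpos μ w a + minpos μ w b ≤ minpos μ w (a * b) := by
  have hw : weight μ (w.take w.length) = weight μ w := by rw [List.take_length]
  constructor
  · intro hpn a b ha hb hab
    have hSab : ({k | k ≤ w.length ∧ a * b ≤ weight μ (w.take k)}).Nonempty :=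
      ⟨w.length, le_refl _, hw ▸ hab⟩
    have hSa_ne : ({k | k ≤ w.length ∧ weight μ (w.take k) ≤ a}).Nonempty :=
      ⟨0, Nat.zero_le _, by simpa [weight] using ha⟩
    have hSa_bdd : BddAbove {k | k ≤ w.length ∧ weight μ (w.take k) ≤ a} :=
      ⟨w.length, fun k hk => hk.1⟩
    have hm : maxpos μ w a ∈ {k | k ≤ w.length ∧ weight μ (w.take k) ≤ a} :=
      Nat.sSup_mem hSa_ne hSa_bdd
    have hn : minpos μ w (a * b) ∈ {k | k ≤ w.length ∧ a * b ≤ weight μ (w.take k)} :=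
      Nat.sInf_mem hSab
    set m := maxpos μ w a with hmdef
    set n := minpos μ w (a * b) with hndef
    have hm1 : m ≤ w.length := hm.1
    have hn1 : n ≤ w.length := hn.1
    have hmn : m ≤ n := by
      by_contra hcon
      push_neg at hcon
      have h1 : weight μ (w.take n) < weight μ (w.take m) :=
        prefix_strict μ hμ w hcon hm.1
      have h2 : a ≤ weight μ (w.take n) :=
        le_trans (le_mul_of_one_le_right' hb) hn.2
      exact absurd (lt_of_le_of_lt h2 (lt_of_lt_of_le h1 hm.2)) (lt_irrefl a)
    set q := weight μ ((w.drop m).take (n - m)) with hqdef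
    have hsplit : weight μ (w.take n) = weight μ (w.take m) * q :=
      prefix_split μ w hmn
    have hbq : b ≤ q := by
      have h1 : a * b ≤ weight μ (w.take m) * q := hsplit ▸ hn.2
      have h2 : weight μ (w.take m) * q ≤ a * q := mul_le_mul_left hm.2 q
      exact le_of_mul_le_mul_left' (le_trans h1 h2)
    have hq : q ≤ weight μ (w.take (n - m)) := by
      have h1 : q ≤ factorWeight μ w (n - m) :=
        factor_le_factorWeight μ w (by omega : m + (n - m) ≤ w.length)
      rw [hpn (n - m) (by omega)] at h1
      exact h1
    have hminb : minpos μ w b ≤ n - m :=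
      Nat.sInf_le ⟨by omega, le_trans hbq hq⟩
    omega
  · intro h i hi
    refine le_antisymm ?_ (prefix_le_factorWeight μ hμ w hi)
    apply factorWeight_le μ w i (one_le_weight μ hμ _)
    intro j hji
    set a := weight μ (w.take j) with hadef
    set b := weight μ ((w.drop j).take i) with hbdef
    have hab : weight μ (w.take (j + i)) = a * b := by
      rw [prefix_split μ w (Nat.le_add_right j i)]
      simp [hadef, hbdef]
    have habw : a * b ≤ weight μ w := by
      rw [← hab, ← hw]
      exact prefix_mono μ hμ w hji
    have key := h a b (one_le_weight μ hμ _) (one_le_weight μ hμ _) habw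
    have hja : j ≤ maxpos μ w a :=
      le_csSup ⟨w.length, fun k hk => hk.1⟩ ⟨by omega, le_refl a⟩
    have hnab : minpos μ w (a * b) ≤ j + i :=
      Nat.sInf_le ⟨hji, hab.ge⟩
    have hminb : minpos μ w b ≤ i := by omega
    have hSb : ({k | k ≤ w.length ∧ b ≤ weight μ (w.take k)}).Nonempty :=
      ⟨w.length, le_refl _, hw ▸ le_trans (le_mul_of_one_le_left' (one_le_weight μ hμ _)) habw⟩
    have hmem := Nat.sInf_mem hSb
    calc b ≤ weight μ (w.take (minpos μ w b)) := hmem.2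
    _ ≤ weight μ (w.take i) := prefix_mono μ hμ w hminb
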